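/- For every b ∈ B and every s = diag(t₁,…,tₙ,t₁,…,tₙ) ∈ 𝔱, the conjugate b·s·b⁻¹ has block form [[a′, c′],[0, ᵀa′]] where a′ is upper triangular and c′ is symmetric with all diagonal entries equal to 0. That is, ⋃_{b ∈ B} b·𝔱·b⁻¹ is contained in 𝔱 ⊕ 𝔫_s, where 𝔫_s = {[[a,c],[0,ᵀa]] : a strictly upper triangular, ᵀc = c, cᵢᵢ = 0 for all i}. -/

import Mathlib

open Matrix

private lemma matAddSelf {k : Type} [Field k] [CharP k 2] {m : Type*} (A : Matrix m m k) :
    A + A = 0 := by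
  have h : (2 : k) • A = A + A := two_smul k A
  rw [show (2 : k) = 0 from by exact_mod_cast CharP.cast_eq_zero k 2, zero_smul] at h
  exact h.symm

private lemma conjDiagZero {k : Type} [Field k] [CharP k 2] {n : ℕ}
    (p M : Matrix (Fin n) (Fin n) k) (hMs : Mᵀ = M) (hMd : ∀ a, M a a = 0) (i : Fin n) :
    (p * M * pᵀ) i i = 0 := by
  have hexp : (p * M * pᵀ) i i = ∑ x : Fin n × Fin n, p i x.1 * M x.1 x.2 * p i x.2 := by
    rw [← Finset.univ_product_univ, Finset.sum_product]
    simp only [Matrix.mul_apply, Matrix.transpose_apply, Finset.sum_mul]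
    rw [Finset.sum_comm]
  rw [hexp]
  apply Finset.sum_involution (fun x _ => (x.2, x.1))
  · intro x _
    have hs : M x.2 x.1 = M x.1 x.2 := by
      have h := congrFun (congrFun hMs x.1) x.2
      rw [Matrix.transpose_apply] at h
      exact h
    show p i x.1 * M x.1 x.2 * p i x.2 + p i x.2 * M x.2 x.1 * p i x.1 = 0
    rw [hs, show p i x.2 * M x.1 x.2 * p i x.1 = p i x.1 * M x.1 x.2 * p i x.2 from by ring]
    exact CharTwo.add_self_eq_zero _
  · rintro ⟨a, c⟩ _ hne
    intro hEq
    have hca : c = a := (Prod.ext_iff.mp hEq).1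
    apply hne
    subst hca
    rw [hMd]
    ring
  · intro x _; exact Finset.mem_univ _
  · intro x _; rfl

/-- The Gram matrix `J = [[0, 1ₙ], [1ₙ, 0]]` of the symplectic form. -/
def Jsp (k : Type*) [Field k] (n : ℕ) : Matrix (Fin n ⊕ Fin n) (Fin n ⊕ Fin n) k :=
  Matrix.fromBlocks 0 1 1 0

/-- The element `diag(t₁,…,tₙ,t₁,…,tₙ)` of `𝔱`. -/
def tDiag (k : Type*) [Field k] (n : ℕ) (t : Fin n → k) :
    Matrix (Fin n ⊕ Fin n) (Fin n ⊕ Fin n) k :=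
  Matrix.fromBlocks (Matrix.diagonal t) 0 0 (Matrix.diagonal t)

/-- For every `b` in the Borel subgroup `B` of `Sp_{2n}(k)` and every
`s = diag(t₁,…,tₙ,t₁,…,tₙ) ∈ 𝔱`, the conjugate `b·s·b⁻¹` has block form `[[a′,c′],[0,a′ᵀ]]`
with `a′` upper triangular and `c′` symmetric with zero diagonal; i.e.
`⋃_{b ∈ B} b·𝔱·b⁻¹ ⊆ 𝔱 ⊕ 𝔫_s`. -/
theorem stmt_16 (k : Type) [Field k] [IsAlgClosed k] [CharP k 2] (n : ℕ) (hn : 1 ≤ n)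
    (b : Matrix (Fin n ⊕ Fin n) (Fin n ⊕ Fin n) k)
    (hbu : IsUnit b) (hbsp : bᵀ * Jsp k n * b = Jsp k n)
    (hbB : ∃ p q r : Matrix (Fin n) (Fin n) k,
      (∀ i j : Fin n, (j : ℕ) < (i : ℕ) → p i j = 0) ∧ b = Matrix.fromBlocks p q 0 r)
    (t : Fin n → k) :
    ∃ a' c' : Matrix (Fin n) (Fin n) k,
      (∀ i j : Fin n, (j : ℕ) < (i : ℕ) → a' i j = 0) ∧
      c'ᵀ = c' ∧ (∀ i : Fin n, c' i i = 0) ∧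
      b * tDiag k n t * b⁻¹ = Matrix.fromBlocks a' c' 0 a'ᵀ := by
  obtain ⟨p, q, r, hptri, hb⟩ := hbB
  rw [hb] at hbsp
  rw [Jsp, Matrix.fromBlocks_transpose, Matrix.fromBlocks_multiply,
    Matrix.fromBlocks_multiply] at hbsp
  simp only [Matrix.transpose_zero, Matrix.mul_zero, Matrix.zero_mul, Matrix.mul_one,
    Matrix.one_mul, add_zero, zero_add, Matrix.mul_assoc] at hbsp
  rw [Matrix.fromBlocks_inj] at hbsp
  obtain ⟨-, h12, h21, h22⟩ := hbsp
  -- h12 : pᵀ * r = 1, h21 : rᵀ * p = 1, h22 : rᵀ * q + qᵀ * r = 0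
  have hpu : IsUnit p := (Matrix.isUnit_iff_isUnit_det p).mpr (Matrix.isUnit_det_of_left_inverse h21)
  have hpinv : p⁻¹ = rᵀ := Matrix.inv_eq_left_inv h21
  have hrt : (pᵀ)⁻¹ = r := Matrix.inv_eq_right_inv h12
  have hpd : IsUnit p.det := (Matrix.isUnit_iff_isUnit_det p).mp hpu
  have hpp : p * p⁻¹ = 1 := Matrix.mul_nonsing_inv p hpd
  have hp1p : p⁻¹ * p = 1 := Matrix.nonsing_inv_mul p hpd
  have hX : (p⁻¹ * q)ᵀ = p⁻¹ * q := by
    rw [Matrix.transpose_mul, Matrix.transpose_nonsing_inv, hrt, hpinv]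
    ext i j
    have h0 := congrFun (congrFun h22 i) j
    simp only [Matrix.add_apply, Matrix.zero_apply] at h0
    have h1 := eq_neg_of_add_eq_zero_right h0
    rw [h1, CharTwo.neg_eq]
  have hMsymm : ((p⁻¹ * q) * diagonal t + diagonal t * (p⁻¹ * q))ᵀ
      = (p⁻¹ * q) * diagonal t + diagonal t * (p⁻¹ * q) := by
    rw [Matrix.transpose_add, Matrix.transpose_mul (p⁻¹ * q) (diagonal t),
      Matrix.transpose_mul (diagonal t) (p⁻¹ * q), Matrix.diagonal_transpose, hX, add_comm]
  have hMdiag : ∀ i, ((p⁻¹ * q) * diagonal t + diagonal t * (p⁻¹ * q)) i i = 0 := by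
    intro i
    simp only [Matrix.add_apply, Matrix.mul_apply]
    rw [← Finset.sum_add_distrib]
    apply Finset.sum_eq_zero
    intro x _
    rcases eq_or_ne x i with hx | hx
    · subst hx
      simp only [Matrix.diagonal_apply_eq]
      rw [mul_comm]
      exact CharTwo.add_self_eq_zero _
    · rw [Matrix.diagonal_apply_ne t hx, Matrix.diagonal_apply_ne' t hx]
      ring
  refine ⟨p * diagonal t * p⁻¹,
    p * ((p⁻¹ * q) * diagonal t + diagonal t * (p⁻¹ * q)) * pᵀ, ?_, ?_, ?_, ?_⟩
  · have htri : BlockTriangular p (Fin.val) := fun i j h => hptri i j h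
    have : Invertible p := hpu.invertible
    have hinv : BlockTriangular p⁻¹ (Fin.val) :=
      Matrix.blockTriangular_inv_of_blockTriangular htri
    have hd : BlockTriangular (diagonal t) (Fin.val) := Matrix.blockTriangular_diagonal t
    exact fun i j h => ((htri.mul hd).mul hinv) h
  · rw [Matrix.transpose_mul, Matrix.transpose_mul, Matrix.transpose_transpose, hMsymm]
    simp only [Matrix.mul_assoc]
  · intro i
    exact conjDiagZero p _ hMsymm hMdiag i
  · have key : b * tDiag k n t
        = Matrix.fromBlocks (p * diagonal t * p⁻¹)
            (p * ((p⁻¹ * q) * diagonal t + diagonal t * (p⁻¹ * q)) * pᵀ) 0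
            (p * diagonal t * p⁻¹)ᵀ * b := by
      rw [hb, tDiag, Matrix.fromBlocks_multiply, Matrix.fromBlocks_multiply]
      have e11 : p * diagonal t * p⁻¹ * p = p * diagonal t := by
        rw [Matrix.mul_assoc, hp1p, Matrix.mul_one]
      have e22 : (p * diagonal t * p⁻¹)ᵀ * r = r * diagonal t := by
        rw [Matrix.transpose_mul, Matrix.transpose_mul, Matrix.transpose_nonsing_inv, hrt,
          Matrix.diagonal_transpose, Matrix.mul_assoc, Matrix.mul_assoc, h12, Matrix.mul_one]
      have e12 : p * diagonal t * p⁻¹ * q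
          + p * ((p⁻¹ * q) * diagonal t + diagonal t * (p⁻¹ * q)) * pᵀ * r = q * diagonal t := by
        have h1 : p * ((p⁻¹ * q) * diagonal t + diagonal t * (p⁻¹ * q)) * pᵀ * r
            = p * ((p⁻¹ * q) * diagonal t) + p * (diagonal t * (p⁻¹ * q)) := by
          rw [Matrix.mul_assoc (p * _) pᵀ r, h12, Matrix.mul_one, Matrix.mul_add]
        rw [h1]
        have h2 : p * ((p⁻¹ * q) * diagonal t) = q * diagonal t := by
          rw [← Matrix.mul_assoc, ← Matrix.mul_assoc, hpp, Matrix.one_mul]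
        have h3 : p * diagonal t * p⁻¹ * q = p * (diagonal t * (p⁻¹ * q)) := by
          simp only [Matrix.mul_assoc]
        rw [h2, h3, add_comm, add_assoc, matAddSelf, add_zero]
      rw [e11, e22, e12]
      simp
    have hbd : IsUnit b.det := (Matrix.isUnit_iff_isUnit_det b).mp hbu
    calc b * tDiag k n t * b⁻¹
        = Matrix.fromBlocks (p * diagonal t * p⁻¹)
            (p * ((p⁻¹ * q) * diagonal t + diagonal t * (p⁻¹ * q)) * pᵀ) 0
            (p * diagonal t * p⁻¹)ᵀ * (b * b⁻¹) := by
          rw [← Matrix.mul_assoc, key]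
      _ = _ := by rw [Matrix.mul_nonsing_inv b hbd, Matrix.mul_one]
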